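/- In the star network setting, letting λ_{j,θ} denote the (unique) Lagrange multipliers satisfying the KKT conditions at θ and σ_θ := Σ_{j=1}^J λ_{j,θ}, the functions θ ↦ λ_{j,θ} (for each j) and θ ↦ σ_θ are piecewise linear on [0,∞): for each such function f there exist finitely many points 0 = t_0 < t_1 < ⋯ < t_m such that f is affine on each interval [t_i, t_{i+1}] and on [t_m, ∞). -/

import Mathlib

/-- The star network setting of Abhishek–Hajek. -/
structure StarSetting where
  /-- number of arms -/
  J : ℕ
  hJ : 0 < J
  /-- number of leaf items on arm `j` -/
  n : Fin J → ℕ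
  hn : ∀ j, 0 < n j
  /-- winning single-item bids -/
  b : (j : Fin J) → Fin (n j) → ℝ
  /-- losing single-item bids -/
  bl : (j : Fin J) → Fin (n j) → ℝ
  /-- losing single-item bid for item zero -/
  bl0 : ℝ
  /-- package bids -/
  C : Fin J → ℝ
  h_bid : ∀ j k, bl j k ≤ b j k
  h_pos : ∀ j, ∃ k, bl j k < b j k

namespace StarSetting

/-- Index of items (= winning buyers): `none` is item zero, `some ⟨j,k⟩` is item `(j,k)`. -/
abbrev Idx (S : StarSetting) := Option ((j : Fin S.J) × Fin (S.n j))

variable (S : StarSetting)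

noncomputable def Δ (j : Fin S.J) (k : Fin (S.n j)) : ℝ := S.b j k - S.bl j k

noncomputable def Δmax (j : Fin S.J) : ℝ :=
  Finset.univ.sup' ⟨⟨0, S.hn j⟩, Finset.mem_univ _⟩ (S.Δ j)

noncomputable def v0 : ℝ :=
  max S.bl0 (Finset.univ.sup' ⟨⟨0, S.hJ⟩, Finset.mem_univ _⟩
    fun j => S.C j - ∑ k, S.b j k)

noncomputable def η (j : Fin S.J) : ℝ := S.v0 + (∑ k, S.b j k) - S.C j

/-- The Vikrey price vector `v_θ`. -/
noncomputable def vick (θ : ℝ) : EuclideanSpace ℝ S.Idx :=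
  WithLp.toLp 2 fun i : S.Idx => Option.elim i S.v0 fun jk => max (S.b jk.1 jk.2 - S.η jk.1 - θ) (S.bl jk.1 jk.2)

/-- The core region `K_θ`. -/
def coreK (θ : ℝ) : Set (EuclideanSpace ℝ S.Idx) :=
  { p | (∀ j, S.C j ≤ p none + ∑ k, p (some ⟨j, k⟩)) ∧
        (∀ j k, S.bl j k ≤ p (some ⟨j, k⟩) ∧ p (some ⟨j, k⟩) ≤ S.b j k) ∧
        S.v0 ≤ p none ∧ p none ≤ S.v0 + θ }

/-- The expanded core region (IR constraint of buyer zero dropped). -/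
def expandedK : Set (EuclideanSpace ℝ S.Idx) :=
  { p | (∀ j, S.C j ≤ p none + ∑ k, p (some ⟨j, k⟩)) ∧
        (∀ j k, S.bl j k ≤ p (some ⟨j, k⟩) ∧ p (some ⟨j, k⟩) ≤ S.b j k) ∧
        S.v0 ≤ p none }

/-- The KKT conditions at `θ` for the projection onto the expanded core. -/
def KKT (θ : ℝ) (p : EuclideanSpace ℝ S.Idx) (lam : Fin S.J → ℝ) : Prop :=
  (∀ j, 0 ≤ lam j) ∧
  p none = S.v0 + ∑ j, lam j ∧
  (∀ j k, p (some ⟨j, k⟩) = min (S.vick θ (some ⟨j, k⟩) + lam j) (S.b j k)) ∧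
  (∀ j, ∑ k, max (min (S.η j + θ) (S.Δ j k) - lam j) 0 ≤ (∑ i, lam i) + S.η j) ∧
  (∀ j, 0 < lam j → (∑ i, lam i) + S.η j = ∑ k, max (min (S.η j + θ) (S.Δ j k) - lam j) 0)

/-- The seller's revenue for a winner price vector. -/
noncomputable def revenue (p : EuclideanSpace ℝ S.Idx) : ℝ :=
  p none + ∑ j, ∑ k, p (some ⟨j, k⟩)

/-- The minimum revenue core at `θ`. -/
def MRC (θ : ℝ) : Set (EuclideanSpace ℝ S.Idx) :=
  { p | p ∈ S.coreK θ ∧ ∀ q ∈ S.coreK θ, S.revenue p ≤ S.revenue q }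

end StarSetting

/-- `q` is a point of `A` nearest to `v` (Euclidean projection of `v` onto `A`). -/
def IsProjOn {E : Type*} [NormedAddCommGroup E] (A : Set E) (v q : E) : Prop :=
  q ∈ A ∧ ∀ r ∈ A, dist v q ≤ dist v r

/-- `f` is piecewise linear on `[0, ∞)`: there are finitely many breakpoints
`0 = t 0 < t 1 < ⋯ < t m` such that `f` is affine on each `[t i, t (i+1)]` and on `[t m, ∞)`. -/
def PiecewiseLinearOnIci (f : ℝ → ℝ) : Prop :=
  ∃ m : ℕ, ∃ t : Fin (m + 1) → ℝ, t 0 = 0 ∧ StrictMono t ∧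
    (∀ i : Fin m, ∃ a c : ℝ, ∀ x ∈ Set.Icc (t i.castSucc) (t i.succ), f x = a * x + c) ∧
    (∃ a c : ℝ, ∀ x ∈ Set.Ici (t (Fin.last m)), f x = a * x + c)


/-- On an open preconnected set where `f` agrees pointwise with one of finitely many lines,
none of which coincide at any point of the set, `f` agrees with a single line. -/
lemma exists_line_eqOn (f : ℝ → ℝ) (P : Finset (ℝ × ℝ)) (s : Set ℝ)
    (hconn : IsPreconnected s) (hne : s.Nonempty)
    (hf : ContinuousOn f s)
    (hval : ∀ x ∈ s, ∃ q ∈ P, f x = q.1 * x + q.2)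
    (hcross : ∀ q ∈ P, ∀ q' ∈ P, q ≠ q' → ∀ x ∈ s, q.1 * x + q.2 ≠ q'.1 * x + q'.2) :
    ∃ q ∈ P, ∀ x ∈ s, f x = q.1 * x + q.2 := by
  obtain ⟨x0, hx0⟩ := hne
  obtain ⟨q0, hq0P, hq0⟩ := hval x0 hx0
  refine ⟨q0, hq0P, ?_⟩
  haveI : PreconnectedSpace s := Subtype.preconnectedSpace hconn
  set g : s → ℝ := s.restrict f with hg
  have hgc : Continuous g := hf.restrict
  have hline : ∀ q : ℝ × ℝ, Continuous (fun x : s => q.1 * (x : ℝ) + q.2) := by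
    intro q; fun_prop
  set E : ℝ × ℝ → Set s := fun q => {x : s | g x = q.1 * (x : ℝ) + q.2} with hE
  have hEclosed : ∀ q, IsClosed (E q) := fun q => isClosed_eq hgc (hline q)
  have hcover : ∀ x : s, ∃ q ∈ P, x ∈ E q := by
    intro x
    obtain ⟨q, hq, hx⟩ := hval x x.2
    exact ⟨q, hq, hx⟩
  have hcompl : (E q0)ᶜ = ⋃ q ∈ P.erase q0, E q := by
    ext x
    simp only [Set.mem_compl_iff, Set.mem_iUnion, hE, Set.mem_setOf_eq]
    constructor
    · intro hx
      obtain ⟨q, hq, hxq⟩ := hcover x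
      refine ⟨q, Finset.mem_erase.mpr ⟨?_, hq⟩, hxq⟩
      rintro rfl; exact hx hxq
    · rintro ⟨q, hq, hxq⟩ hx0'
      obtain ⟨hqne, hqP⟩ := Finset.mem_erase.mp hq
      exact hcross q hqP q0 hq0P hqne x x.2 (hxq ▸ hx0')
  have hopen : IsOpen (E q0) := by
    rw [← isClosed_compl_iff, hcompl]
    exact Set.Finite.isClosed_biUnion (P.erase q0).finite_toSet (fun q _ => hEclosed q)
  have hEuniv : E q0 = Set.univ := by
    refine (IsClopen.eq_univ ⟨hEclosed q0, hopen⟩ ⟨⟨x0, hx0⟩, ?_⟩)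
    exact hq0
  intro x hx
  have := hEuniv ▸ Set.mem_univ (⟨x, hx⟩ : s)
  exact this

/-- Extend an affine identity from a set to a closure point inside the domain of continuity. -/
lemma eq_line_of_mem_closure (f : ℝ → ℝ) (hf : ContinuousOn f (Set.Ici 0)) (s : Set ℝ)
    (hs : s ⊆ Set.Ici 0) (a c x : ℝ) (hx : x ∈ Set.Ici (0:ℝ)) (hxc : x ∈ closure s)
    (h : ∀ y ∈ s, f y = a * y + c) : f x = a * x + c := by
  have hne : (nhdsWithin x s).NeBot := mem_closure_iff_nhdsWithin_neBot.mp hxc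
  have h1 : Filter.Tendsto f (nhdsWithin x s) (nhds (f x)) :=
    ((hf x hx).mono hs)
  have h2 : Filter.Tendsto (fun y => a * y + c) (nhdsWithin x s) (nhds (a * x + c)) := by
    exact ((continuous_const.mul continuous_id).add continuous_const).continuousWithinAt
  have h3 : Filter.Tendsto f (nhdsWithin x s) (nhds (a * x + c)) := by
    refine h2.congr' ?_
    filter_upwards [self_mem_nhdsWithin] with y hy
    exact (h y hy).symm
  exact tendsto_nhds_unique h1 h3

/-- Main generic lemma: a continuous function on `[0,∞)` whose graph lies in finitely many
lines is piecewise linear. -/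
lemma piecewiseLinearOnIci_of_lines (f : ℝ → ℝ) (hf : ContinuousOn f (Set.Ici 0))
    (P : Finset (ℝ × ℝ)) (hP : ∀ x ∈ Set.Ici (0:ℝ), ∃ q ∈ P, f x = q.1 * x + q.2) :
    PiecewiseLinearOnIci f := by
  classical
  set T : Finset ℝ :=
    (insert (0:ℝ) ((P ×ˢ P).image (fun qq => (qq.2.2 - qq.1.2) / (qq.1.1 - qq.2.1)))).filter
      (fun x => 0 ≤ x) with hT
  have h0T : (0:ℝ) ∈ T := by simp [hT]
  have hTnonneg : ∀ x ∈ T, (0:ℝ) ≤ x := fun x hx => (Finset.mem_filter.mp hx).2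
  have hTcard : T.card = (T.card - 1) + 1 :=
    (Nat.succ_pred_eq_of_pos (Finset.card_pos.mpr ⟨0, h0T⟩)).symm
  set m : ℕ := T.card - 1 with hm
  set e := T.orderIsoOfFin hTcard with he
  set t : Fin (m + 1) → ℝ := fun i => (e i : ℝ) with ht
  have tmono : StrictMono t := fun i j hij => by
    exact_mod_cast e.strictMono hij
  have hmemT : ∀ x ∈ T, ∃ i, t i = x := by
    intro x hx
    obtain ⟨i, hi⟩ := e.surjective ⟨x, hx⟩
    exact ⟨i, by rw [ht]; exact congrArg Subtype.val hi⟩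
  have htmem : ∀ i, t i ∈ T := fun i => (e i).2
  have ht0 : t 0 = 0 := by
    obtain ⟨i, hi⟩ := hmemT 0 h0T
    have h1 : t 0 ≤ t i := tmono.monotone (Fin.zero_le i)
    have h2 : (0:ℝ) ≤ t 0 := hTnonneg _ (htmem 0)
    rw [hi] at h1
    linarith
  have hcrossT : ∀ q ∈ P, ∀ q' ∈ P, q ≠ q' → ∀ x : ℝ, 0 ≤ x →
      q.1 * x + q.2 = q'.1 * x + q'.2 → x ∈ T := by
    intro q hq q' hq' hne x hx heq
    have hslope : q.1 ≠ q'.1 := by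
      intro h
      apply hne
      have : q.2 = q'.2 := by rw [h] at heq; linarith
      exact Prod.ext h this
    have hxval : x = (q'.2 - q.2) / (q.1 - q'.1) := by
      field_simp [sub_ne_zero.mpr hslope]
      linarith
    refine Finset.mem_filter.mpr ⟨?_, hx⟩
    refine Finset.mem_insert.mpr (Or.inr ?_)
    refine Finset.mem_image.mpr ⟨(q, q'), Finset.mem_product.mpr ⟨hq, hq'⟩, hxval.symm⟩
  have hnonneg_t : ∀ i, (0:ℝ) ≤ t i := fun i => hTnonneg _ (htmem i)
  refine ⟨m, t, ht0, tmono, ?_, ?_⟩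
  · intro i
    have hlt : t i.castSucc < t i.succ := tmono Fin.castSucc_lt_succ
    set s : Set ℝ := Set.Ioo (t i.castSucc) (t i.succ) with hs
    have hsub : s ⊆ Set.Ici (0:ℝ) := fun x hx => le_trans (hnonneg_t i.castSucc) (le_of_lt hx.1)
    have hnoT : ∀ x ∈ s, x ∉ T := by
      rintro x ⟨hx1, hx2⟩ hxT
      obtain ⟨i', hi'⟩ := hmemT x hxT
      rw [← hi'] at hx1 hx2
      have h1 : i.castSucc < i' := tmono.lt_iff_lt.mp hx1
      have h2 : i.succ ≤ i' := Fin.castSucc_lt_iff_succ_le.mp h1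
      exact absurd (tmono.monotone h2) (not_le.mpr hx2)
    obtain ⟨q, hqP, hq⟩ := exists_line_eqOn f P s isPreconnected_Ioo
      (Set.nonempty_Ioo.mpr hlt) (hf.mono hsub)
      (fun x hx => hP x (hsub hx))
      (fun q hq q' hq' hne x hx heq => hnoT x hx (hcrossT q hq q' hq' hne x (hsub hx) heq))
    refine ⟨q.1, q.2, fun x hx => ?_⟩
    refine eq_line_of_mem_closure f hf s hsub q.1 q.2 x
      (le_trans (hnonneg_t i.castSucc) hx.1) ?_ hq
    rw [hs, closure_Ioo (ne_of_lt hlt)]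
    exact hx
  · set s : Set ℝ := Set.Ioi (t (Fin.last m)) with hs
    have hsub : s ⊆ Set.Ici (0:ℝ) := fun x hx => le_trans (hnonneg_t _) (le_of_lt hx)
    have hnoT : ∀ x ∈ s, x ∉ T := by
      intro x hx hxT
      obtain ⟨i', hi'⟩ := hmemT x hxT
      have : t i' ≤ t (Fin.last m) := tmono.monotone (Fin.le_last i')
      rw [hi'] at this
      exact absurd this (not_le.mpr hx)
    obtain ⟨q, hqP, hq⟩ := exists_line_eqOn f P s isPreconnected_Ioi
      (Set.nonempty_Ioi) (hf.mono hsub)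
      (fun x hx => hP x (hsub hx))
      (fun q hq q' hq' hne x hx heq => hnoT x hx (hcrossT q hq q' hq' hne x (hsub hx) heq))
    refine ⟨q.1, q.2, fun x hx => ?_⟩
    refine eq_line_of_mem_closure f hf s hsub q.1 q.2 x
      (le_trans (hnonneg_t _) hx) ?_ hq
    rw [hs, closure_Ioi]
    exact hx


namespace StarSetting

variable (S : StarSetting)

lemma eta_nonneg (j : Fin S.J) : 0 ≤ S.η j := by
  have h1 : S.C j - ∑ k, S.b j k ≤ S.v0 := by
    refine le_trans ?_ (le_max_right _ _)
    exact Finset.le_sup' (fun j => S.C j - ∑ k, S.b j k) (Finset.mem_univ j)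
  unfold η
  linarith

/-- The function appearing in the complementary-slackness conditions. -/
noncomputable def Fsum (θ : ℝ) (j : Fin S.J) (x : ℝ) : ℝ :=
  ∑ k, max (min (S.η j + θ) (S.Δ j k) - x) 0

lemma Fsum_nonneg (θ : ℝ) (j : Fin S.J) (x : ℝ) : 0 ≤ S.Fsum θ j x :=
  Finset.sum_nonneg fun k _ => le_max_right _ _

lemma Fsum_anti (θ : ℝ) (j : Fin S.J) {x y : ℝ} (hxy : x ≤ y) :
    S.Fsum θ j y ≤ S.Fsum θ j x := by
  refine Finset.sum_le_sum fun k _ => ?_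
  exact max_le_max (by linarith) le_rfl

lemma Fsum_mono_theta {θ θ' : ℝ} (hθ : θ ≤ θ') (j : Fin S.J) (x : ℝ) :
    S.Fsum θ j x ≤ S.Fsum θ' j x := by
  refine Finset.sum_le_sum fun k _ => ?_
  have : min (S.η j + θ) (S.Δ j k) ≤ min (S.η j + θ') (S.Δ j k) :=
    min_le_min (by linarith) le_rfl
  exact max_le_max (by linarith) le_rfl

lemma Fsum_theta_lipschitz {θ θ' : ℝ} (hθ : θ ≤ θ') (j : Fin S.J) (x : ℝ) :
    S.Fsum θ' j x ≤ S.Fsum θ j x + (S.n j : ℝ) * (θ' - θ) := by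
  have key : ∀ k, max (min (S.η j + θ') (S.Δ j k) - x) 0
      ≤ max (min (S.η j + θ) (S.Δ j k) - x) 0 + (θ' - θ) := by
    intro k
    have h1 : min (S.η j + θ') (S.Δ j k) ≤ min (S.η j + θ) (S.Δ j k) + (θ' - θ) := by
      rcases min_le_iff.mp (le_refl (min (S.η j + θ') (S.Δ j k))) with _ | _
      · rcases le_total (S.η j + θ) (S.Δ j k) with h | h
        · rw [min_eq_left h]
          calc min (S.η j + θ') (S.Δ j k) ≤ S.η j + θ' := min_le_left _ _
            _ = S.η j + θ + (θ' - θ) := by ring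
        · rw [min_eq_right h]
          calc min (S.η j + θ') (S.Δ j k) ≤ S.Δ j k := min_le_right _ _
            _ ≤ S.Δ j k + (θ' - θ) := by linarith
      · rcases le_total (S.η j + θ) (S.Δ j k) with h | h
        · rw [min_eq_left h]
          calc min (S.η j + θ') (S.Δ j k) ≤ S.η j + θ' := min_le_left _ _
            _ = S.η j + θ + (θ' - θ) := by ring
        · rw [min_eq_right h]
          calc min (S.η j + θ') (S.Δ j k) ≤ S.Δ j k := min_le_right _ _
            _ ≤ S.Δ j k + (θ' - θ) := by linarith
    refine max_le ?_ ?_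
    · calc min (S.η j + θ') (S.Δ j k) - x ≤ min (S.η j + θ) (S.Δ j k) - x + (θ' - θ) := by
            linarith
        _ ≤ max (min (S.η j + θ) (S.Δ j k) - x) 0 + (θ' - θ) := by
            have := le_max_left (min (S.η j + θ) (S.Δ j k) - x) 0
            linarith
    · have := le_max_right (min (S.η j + θ) (S.Δ j k) - x) 0
      linarith
  calc S.Fsum θ' j x ≤ ∑ k, (max (min (S.η j + θ) (S.Δ j k) - x) 0 + (θ' - θ)) :=
        Finset.sum_le_sum fun k _ => key k
    _ = S.Fsum θ j x + (S.n j : ℝ) * (θ' - θ) := by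
        rw [Finset.sum_add_distrib, Fsum]
        simp [Finset.card_univ, mul_comm]
        ring

lemma Fsum_strict (θ : ℝ) (j : Fin S.J) {x x' : ℝ} (hF : 0 < S.Fsum θ j x) (hx : x' ≤ x) :
    S.Fsum θ j x + (x - x') ≤ S.Fsum θ j x' := by
  classical
  obtain ⟨k0, -, hk0⟩ : ∃ k ∈ Finset.univ, (0:ℝ) < max (min (S.η j + θ) (S.Δ j k) - x) 0 := by
    by_contra hcon
    push_neg at hcon
    have : S.Fsum θ j x ≤ 0 :=
      Finset.sum_nonpos fun k hk => hcon k hk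
    linarith
  have hc : 0 < min (S.η j + θ) (S.Δ j k0) - x := by
    by_contra hcon
    push_neg at hcon
    rw [max_eq_right hcon] at hk0
    exact lt_irrefl _ hk0
  have key : ∀ k, max (min (S.η j + θ) (S.Δ j k) - x) 0
      + (if k = k0 then (x - x') else 0) ≤ max (min (S.η j + θ) (S.Δ j k) - x') 0 := by
    intro k
    by_cases hk : k = k0
    · subst hk
      rw [if_pos rfl, max_eq_left (le_of_lt hc), max_eq_left (by linarith)]
      linarith
    · rw [if_neg hk, add_zero]
      exact max_le_max (by linarith) le_rfl
  calc S.Fsum θ j x + (x - x')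
      = ∑ k, (max (min (S.η j + θ) (S.Δ j k) - x) 0 + (if k = k0 then (x - x') else 0)) := by
        rw [Finset.sum_add_distrib, Finset.sum_ite_eq' Finset.univ k0 (fun _ => x - x')]
        simp [Fsum]
    _ ≤ S.Fsum θ j x' := Finset.sum_le_sum fun k _ => key k

lemma kkt_Fsum_le {θ : ℝ} {p : EuclideanSpace ℝ S.Idx} {l : Fin S.J → ℝ}
    (h : S.KKT θ p l) (j : Fin S.J) : S.Fsum θ j (l j) ≤ (∑ i, l i) + S.η j :=
  h.2.2.2.1 j

lemma kkt_Fsum_eq {θ : ℝ} {p : EuclideanSpace ℝ S.Idx} {l : Fin S.J → ℝ}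
    (h : S.KKT θ p l) (j : Fin S.J) (hj : 0 < l j) :
    (∑ i, l i) + S.η j = S.Fsum θ j (l j) :=
  h.2.2.2.2 j hj

lemma kkt_compare {θ θ' : ℝ} {p p' : EuclideanSpace ℝ S.Idx} {l l' : Fin S.J → ℝ}
    (hθ : θ ≤ θ') (h : S.KKT θ p l) (h' : S.KKT θ' p' l') :
    (∑ j, l j ≤ ∑ j, l' j) ∧
    (∑ j, l' j ≤ ∑ j, l j + (∑ j, (S.n j : ℝ)) * (θ' - θ)) ∧
    (∀ j, l j ≤ l' j + (∑ i, l' i - ∑ i, l i)) ∧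
    (∀ j, l' j ≤ l j + (∑ i, l' i - ∑ i, l i) + (S.n j : ℝ) * (θ' - θ)) := by
  have hδ : 0 ≤ θ' - θ := by linarith
  have hNn : ∀ j, (S.n j : ℝ) ≤ ∑ i, (S.n i : ℝ) :=
    fun j => Finset.single_le_sum (f := fun i => (S.n i : ℝ))
      (fun i _ => by positivity) (Finset.mem_univ j)
  have hN0 : (0:ℝ) ≤ ∑ i, (S.n i : ℝ) := Finset.sum_nonneg fun i _ => by positivity
  have hl0 : ∀ j, 0 ≤ l j := h.1
  have hl'0 : ∀ j, 0 ≤ l' j := h'.1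
  have hσl : ∀ j, l j ≤ ∑ i, l i :=
    fun j => Finset.single_le_sum (fun i _ => hl0 i) (Finset.mem_univ j)
  have hσl' : ∀ j, l' j ≤ ∑ i, l' i :=
    fun j => Finset.single_le_sum (fun i _ => hl'0 i) (Finset.mem_univ j)
  have part1 : ∑ j, l j ≤ ∑ j, l' j := by
    by_contra hcon
    push_neg at hcon
    have hall : ∀ j, l j ≤ l' j := by
      intro j
      rcases eq_or_lt_of_le (hl0 j) with hz | hz
      · exact le_trans hz.symm.le (hl'0 j)
      · have heq := S.kkt_Fsum_eq h j hz
        have hchain : S.Fsum θ' j (l' j) < S.Fsum θ' j (l j) := by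
          calc S.Fsum θ' j (l' j) ≤ (∑ i, l' i) + S.η j := S.kkt_Fsum_le h' j
            _ < (∑ i, l i) + S.η j := by linarith
            _ = S.Fsum θ j (l j) := heq
            _ ≤ S.Fsum θ' j (l j) := S.Fsum_mono_theta hθ j _
        by_contra hcon2
        push_neg at hcon2
        exact absurd (S.Fsum_anti θ' j hcon2.le) (not_le.mpr hchain)
    exact absurd (Finset.sum_le_sum fun j _ => hall j) (not_le.mpr hcon)
  have part2 : ∑ j, l' j ≤ ∑ j, l j + (∑ j, (S.n j : ℝ)) * (θ' - θ) := by
    by_contra hcon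
    push_neg at hcon
    have hall : ∀ j, l' j ≤ l j := by
      intro j
      rcases eq_or_lt_of_le (hl'0 j) with hz | hz
      · exact le_trans hz.symm.le (hl0 j)
      · have heq := S.kkt_Fsum_eq h' j hz
        have hchain : S.Fsum θ' j (l j) < S.Fsum θ' j (l' j) := by
          have h1 : S.Fsum θ' j (l j) ≤ S.Fsum θ j (l j) + (S.n j : ℝ) * (θ' - θ) :=
            S.Fsum_theta_lipschitz hθ j _
          have h2 : S.Fsum θ j (l j) ≤ (∑ i, l i) + S.η j := S.kkt_Fsum_le h j
          have h3 : (S.n j : ℝ) * (θ' - θ) ≤ (∑ i, (S.n i : ℝ)) * (θ' - θ) :=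
            mul_le_mul_of_nonneg_right (hNn j) hδ
          have h4 : (∑ i, l' i) + S.η j = S.Fsum θ' j (l' j) := heq
          linarith
        by_contra hcon2
        push_neg at hcon2
        exact absurd (S.Fsum_anti θ' j hcon2.le) (not_le.mpr hchain)
    have : ∑ j, l' j ≤ ∑ j, l j := Finset.sum_le_sum fun j _ => hall j
    nlinarith
  refine ⟨part1, part2, ?_, ?_⟩
  · intro j
    rcases eq_or_lt_of_le (hl0 j) with hz | hz
    · rw [← hz]
      have := hl'0 j
      linarith
    · by_contra hcon
      push_neg at hcon
      have hlt : l' j ≤ l j := by linarith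
      have hFpos : 0 < S.Fsum θ j (l j) := by
        rw [← S.kkt_Fsum_eq h j hz]
        have := S.eta_nonneg j
        have := hσl j
        linarith
      have h1 : S.Fsum θ j (l j) + (l j - l' j) ≤ S.Fsum θ j (l' j) :=
        S.Fsum_strict θ j hFpos hlt
      have h2 : S.Fsum θ j (l' j) ≤ S.Fsum θ' j (l' j) := S.Fsum_mono_theta hθ j _
      have h3 : S.Fsum θ' j (l' j) ≤ (∑ i, l' i) + S.η j := S.kkt_Fsum_le h' j
      have h4 : (∑ i, l i) + S.η j = S.Fsum θ j (l j) := S.kkt_Fsum_eq h j hz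
      linarith
  · intro j
    rcases eq_or_lt_of_le (hl'0 j) with hz | hz
    · rw [← hz]
      have h1 := hl0 j
      have h2 : (0:ℝ) ≤ (S.n j : ℝ) * (θ' - θ) := by positivity
      linarith
    · by_contra hcon
      push_neg at hcon
      have hlt : l j ≤ l' j := by
        have h2 : (0:ℝ) ≤ (S.n j : ℝ) * (θ' - θ) := by positivity
        linarith
      have hFpos : 0 < S.Fsum θ' j (l' j) := by
        rw [← S.kkt_Fsum_eq h' j hz]
        have := S.eta_nonneg j
        have := hσl' j
        linarith
      have h1 : S.Fsum θ' j (l' j) + (l' j - l j) ≤ S.Fsum θ' j (l j) :=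
        S.Fsum_strict θ' j hFpos hlt
      have h2 : S.Fsum θ' j (l j) ≤ S.Fsum θ j (l j) + (S.n j : ℝ) * (θ' - θ) :=
        S.Fsum_theta_lipschitz hθ j _
      have h3 : S.Fsum θ j (l j) ≤ (∑ i, l i) + S.η j := S.kkt_Fsum_le h j
      have h4 : (∑ i, l' i) + S.η j = S.Fsum θ' j (l' j) := S.kkt_Fsum_eq h' j hz
      linarith

end StarSetting


namespace StarSetting

variable (S : StarSetting)

noncomputable def patA (A : ∀ j : Fin S.J, Finset (Fin (S.n j))) (j : Fin S.J) : ℝ :=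
  ((A j).card : ℝ)

noncomputable def patM (A B : ∀ j : Fin S.J, Finset (Fin (S.n j))) (j : Fin S.J) : ℝ :=
  (((A j) ∩ (B j)).card : ℝ)

noncomputable def patD (A B : ∀ j : Fin S.J, Finset (Fin (S.n j))) (j : Fin S.J) : ℝ :=
  ∑ k ∈ (A j) \ (B j), S.Δ j k

noncomputable def patR (Sf : Finset (Fin S.J)) (A : ∀ j : Fin S.J, Finset (Fin (S.n j))) : ℝ :=
  ∑ j ∈ Sf, (S.patA A j)⁻¹

noncomputable def sigSlope (Sf : Finset (Fin S.J)) (A B : ∀ j : Fin S.J, Finset (Fin (S.n j))) : ℝ :=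
  (∑ j ∈ Sf, S.patM A B j / S.patA A j) / (1 + S.patR Sf A)

noncomputable def sigInt (Sf : Finset (Fin S.J)) (A B : ∀ j : Fin S.J, Finset (Fin (S.n j))) : ℝ :=
  (∑ j ∈ Sf, (S.patM A B j * S.η j + S.patD A B j - S.η j) / S.patA A j) / (1 + S.patR Sf A)

noncomputable def lamSlope (Sf : Finset (Fin S.J)) (A B : ∀ j : Fin S.J, Finset (Fin (S.n j)))
    (j : Fin S.J) : ℝ :=
  if j ∈ Sf then (S.patM A B j - S.sigSlope Sf A B) / S.patA A j else 0

noncomputable def lamInt (Sf : Finset (Fin S.J)) (A B : ∀ j : Fin S.J, Finset (Fin (S.n j)))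
    (j : Fin S.J) : ℝ :=
  if j ∈ Sf then
    (S.patM A B j * S.η j + S.patD A B j - S.η j - S.sigInt Sf A B) / S.patA A j else 0

open Classical in
noncomputable def lamLines (j : Fin S.J) : Finset (ℝ × ℝ) :=
  Finset.image
    (fun w : Finset (Fin S.J) × ((i : Fin S.J) → Finset (Fin (S.n i)))
        × ((i : Fin S.J) → Finset (Fin (S.n i))) =>
      (S.lamSlope w.1 w.2.1 w.2.2 j, S.lamInt w.1 w.2.1 w.2.2 j)) Finset.univ

open Classical in
noncomputable def sigLines : Finset (ℝ × ℝ) :=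
  Finset.image
    (fun w : Finset (Fin S.J) × ((i : Fin S.J) → Finset (Fin (S.n i)))
        × ((i : Fin S.J) → Finset (Fin (S.n i))) =>
      (S.sigSlope w.1 w.2.1 w.2.2, S.sigInt w.1 w.2.1 w.2.2)) Finset.univ

lemma kkt_affine {θ : ℝ} {p : EuclideanSpace ℝ S.Idx} {l : Fin S.J → ℝ} (h : S.KKT θ p l) :
    ∃ (Sf : Finset (Fin S.J)) (A B : ∀ j : Fin S.J, Finset (Fin (S.n j))),
      (∀ j, l j = S.lamSlope Sf A B j * θ + S.lamInt Sf A B j) ∧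
      (∑ j, l j = S.sigSlope Sf A B * θ + S.sigInt Sf A B) := by
  classical
  set σ : ℝ := ∑ i, l i with hσdef
  set Sf : Finset (Fin S.J) := Finset.univ.filter (fun j => 0 < l j) with hSf
  set A : ∀ j : Fin S.J, Finset (Fin (S.n j)) :=
    fun j => Finset.univ.filter (fun k => l j ≤ min (S.η j + θ) (S.Δ j k)) with hA
  set B : ∀ j : Fin S.J, Finset (Fin (S.n j)) :=
    fun j => Finset.univ.filter (fun k => S.η j + θ ≤ S.Δ j k) with hB
  have hl0 : ∀ j, 0 ≤ l j := h.1
  have hσl : ∀ j, l j ≤ σ :=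
    fun j => Finset.single_le_sum (fun i _ => hl0 i) (Finset.mem_univ j)
  -- decomposition of Fsum
  have hdecomp : ∀ j, S.Fsum θ j (l j)
      = S.patM A B j * (S.η j + θ) + S.patD A B j - S.patA A j * l j := by
    intro j
    have h1 : S.Fsum θ j (l j) = ∑ k ∈ A j, (min (S.η j + θ) (S.Δ j k) - l j) := by
      rw [Fsum, hA]
      rw [Finset.sum_filter]
      refine Finset.sum_congr rfl fun k _ => ?_
      rcases le_or_gt (l j) (min (S.η j + θ) (S.Δ j k)) with hk | hk
      · rw [max_eq_left (by linarith), if_pos hk]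
      · rw [max_eq_right (by linarith), if_neg (not_le.mpr hk)]
    have h2 : ∑ k ∈ (A j) ∩ (B j), (min (S.η j + θ) (S.Δ j k) - l j)
        + ∑ k ∈ (A j) \ (B j), (min (S.η j + θ) (S.Δ j k) - l j)
        = ∑ k ∈ A j, (min (S.η j + θ) (S.Δ j k) - l j) :=
      Finset.sum_inter_add_sum_sdiff _ _ _
    have h3 : ∑ k ∈ (A j) ∩ (B j), (min (S.η j + θ) (S.Δ j k) - l j)
        = (((A j) ∩ (B j)).card : ℝ) * (S.η j + θ - l j) := by
      rw [Finset.sum_congr rfl (fun k hk => ?_), Finset.sum_const, nsmul_eq_mul]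
      have hkB : k ∈ B j := (Finset.mem_inter.mp hk).2
      rw [hB] at hkB
      have := (Finset.mem_filter.mp hkB).2
      rw [min_eq_left this]
    have h4 : ∑ k ∈ (A j) \ (B j), (min (S.η j + θ) (S.Δ j k) - l j)
        = S.patD A B j - (((A j) \ (B j)).card : ℝ) * l j := by
      rw [patD, Finset.sum_sub_distrib, Finset.sum_const, nsmul_eq_mul]
      congr 1
      refine Finset.sum_congr rfl fun k hk => ?_
      have hkB : k ∉ B j := (Finset.mem_sdiff.mp hk).2
      rw [hB] at hkB
      simp only [Finset.mem_filter, Finset.mem_univ, true_and] at hkB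
      push_neg at hkB
      rw [min_eq_right (le_of_lt hkB)]
    have h5 : (((A j) ∩ (B j)).card : ℝ) + (((A j) \ (B j)).card : ℝ) = ((A j).card : ℝ) := by
      rw [← Nat.cast_add, Finset.card_inter_add_card_sdiff]
    rw [h1, ← h2, h3, h4, patM, patA]
    linear_combination (-(l j)) * h5
  have hApos : ∀ j ∈ Sf, (0:ℝ) < S.patA A j := by
    intro j hj
    have hjpos : 0 < l j := (Finset.mem_filter.mp hj).2
    by_contra hcon
    push_neg at hcon
    have hcard : (A j).card = 0 := by
      have : (0:ℝ) ≤ ((A j).card : ℝ) := Nat.cast_nonneg _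
      rw [patA] at hcon
      exact_mod_cast le_antisymm hcon this
    have hAempty : A j = ∅ := Finset.card_eq_zero.mp hcard
    have hF0 : S.Fsum θ j (l j) = 0 := by
      rw [hdecomp j, patM, patD, patA, hAempty]
      simp
    have heq := S.kkt_Fsum_eq h j hjpos
    rw [hF0] at heq
    have := S.eta_nonneg j
    have := hσl j
    rw [← hσdef] at heq
    linarith
  have hEq : ∀ j ∈ Sf, S.patA A j * l j + σ
      = S.patM A B j * (S.η j + θ) + S.patD A B j - S.η j := by
    intro j hj
    have hjpos : 0 < l j := (Finset.mem_filter.mp hj).2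
    have heq := S.kkt_Fsum_eq h j hjpos
    rw [hdecomp j, ← hσdef] at heq
    linarith
  have hσSf : σ = ∑ j ∈ Sf, l j := by
    have := Finset.sum_filter_add_sum_filter_not Finset.univ (fun j => 0 < l j) l
    have hz : ∑ j ∈ Finset.univ.filter (fun j => ¬ 0 < l j), l j = 0 :=
      Finset.sum_eq_zero fun j hj => le_antisymm
        (not_lt.mp (Finset.mem_filter.mp hj).2) (hl0 j)
    rw [hz, add_zero] at this
    rw [hσdef, ← this, hSf]
  have hlval : ∀ j ∈ Sf, l j
      = (S.patM A B j * S.η j + S.patD A B j - S.η j) / S.patA A j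
        + (S.patM A B j / S.patA A j) * θ - σ * (S.patA A j)⁻¹ := by
    intro j hj
    have h1 := hEq j hj
    have h2 := hApos j hj
    field_simp
    linarith
  set E' : ℝ := ∑ j ∈ Sf, (S.patM A B j * S.η j + S.patD A B j - S.η j) / S.patA A j with hE'
  set F' : ℝ := ∑ j ∈ Sf, S.patM A B j / S.patA A j with hF'
  have hR0 : 0 ≤ S.patR Sf A := by
    rw [patR]
    exact Finset.sum_nonneg fun j _ => inv_nonneg.mpr (by rw [patA]; positivity)
  have h1R : (0:ℝ) < 1 + S.patR Sf A := by linarith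
  have hσlin : σ * (1 + S.patR Sf A) = E' + F' * θ := by
    have step : σ = E' + F' * θ - σ * S.patR Sf A := by
      calc σ = ∑ j ∈ Sf, l j := hσSf
        _ = ∑ j ∈ Sf, ((S.patM A B j * S.η j + S.patD A B j - S.η j) / S.patA A j
            + (S.patM A B j / S.patA A j) * θ - σ * (S.patA A j)⁻¹) :=
          Finset.sum_congr rfl fun j hj => hlval j hj
        _ = E' + F' * θ - σ * S.patR Sf A := by
          rw [Finset.sum_sub_distrib, Finset.sum_add_distrib, ← Finset.sum_mul,
            ← Finset.mul_sum, hE', hF', patR]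
    linarith
  have hσaffine : σ = S.sigSlope Sf A B * θ + S.sigInt Sf A B := by
    have hval : σ = (E' + F' * θ) / (1 + S.patR Sf A) := by
      rw [eq_div_iff (ne_of_gt h1R)]
      linarith
    rw [sigSlope, sigInt, ← hE', ← hF', hval]
    ring
  refine ⟨Sf, A, B, ?_, hσaffine⟩
  intro j
  by_cases hj : j ∈ Sf
  · have h1 := hlval j hj
    have h2 := hApos j hj
    rw [lamSlope, lamInt, if_pos hj, if_pos hj]
    rw [hσaffine] at h1
    field_simp at h1 ⊢
    linarith
  · have hz : l j = 0 := by
      rw [hSf] at hj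
      simp only [Finset.mem_filter, Finset.mem_univ, true_and] at hj
      exact le_antisymm (not_lt.mp hj) (hl0 j)
    rw [lamSlope, lamInt, if_neg hj, if_neg hj, hz]
    ring

lemma kkt_mem_lamLines {θ : ℝ} {p : EuclideanSpace ℝ S.Idx} {l : Fin S.J → ℝ}
    (h : S.KKT θ p l) (j : Fin S.J) :
    ∃ q ∈ S.lamLines j, l j = q.1 * θ + q.2 := by
  classical
  obtain ⟨Sf, A, B, h1, _⟩ := S.kkt_affine h
  refine ⟨(S.lamSlope Sf A B j, S.lamInt Sf A B j), ?_, h1 j⟩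
  rw [lamLines]
  exact Finset.mem_image.mpr ⟨(Sf, A, B), Finset.mem_univ _, rfl⟩

lemma kkt_mem_sigLines {θ : ℝ} {p : EuclideanSpace ℝ S.Idx} {l : Fin S.J → ℝ}
    (h : S.KKT θ p l) :
    ∃ q ∈ S.sigLines, ∑ j, l j = q.1 * θ + q.2 := by
  classical
  obtain ⟨Sf, A, B, _, h2⟩ := S.kkt_affine h
  refine ⟨(S.sigSlope Sf A B, S.sigInt Sf A B), ?_, h2⟩
  rw [sigLines]
  exact Finset.mem_image.mpr ⟨(Sf, A, B), Finset.mem_univ _, rfl⟩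

end StarSetting

/-- the Lagrange multipliers `θ ↦ λ_{j,θ}` of the KKT conditions, and their
sum `θ ↦ σ_θ`, are piecewise linear functions on `[0,∞)`. -/
theorem kkt_multipliers_piecewise_linear (S : StarSetting)
    (lam : ℝ → Fin S.J → ℝ)
    (hlam : ∀ θ : ℝ, 0 ≤ θ → ∃ p : EuclideanSpace ℝ S.Idx, S.KKT θ p (lam θ)) :
    (∀ j, PiecewiseLinearOnIci fun θ => lam θ j) ∧
    PiecewiseLinearOnIci fun θ => ∑ j, lam θ j := by
  classical
  set N : ℝ := ∑ j, (S.n j : ℝ) with hN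
  have hN0 : (0:ℝ) ≤ N := Finset.sum_nonneg fun i _ => by positivity
  have hbound : ∀ θ ∈ Set.Ici (0:ℝ), ∀ θ' ∈ Set.Ici (0:ℝ), θ ≤ θ' →
      (∀ j, |lam θ' j - lam θ j| ≤ (2 * N) * (θ' - θ)) ∧
      |(∑ j, lam θ' j) - ∑ j, lam θ j| ≤ (2 * N) * (θ' - θ) := by
    intro θ hθ θ' hθ' hle
    obtain ⟨p, hp⟩ := hlam θ hθ
    obtain ⟨p', hp'⟩ := hlam θ' hθ'
    obtain ⟨c1, c2, c3, c4⟩ := S.kkt_compare hle hp hp'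
    rw [← hN] at c2
    have hδ : 0 ≤ θ' - θ := by linarith
    have hNδ : 0 ≤ N * (θ' - θ) := mul_nonneg hN0 hδ
    have hNn : ∀ j, (S.n j : ℝ) ≤ N := fun j =>
      hN ▸ Finset.single_le_sum (f := fun i => (S.n i : ℝ))
        (fun i _ => by positivity) (Finset.mem_univ j)
    refine ⟨fun j => ?_, ?_⟩
    · rw [abs_sub_le_iff]
      have h3 : (S.n j : ℝ) * (θ' - θ) ≤ N * (θ' - θ) :=
        mul_le_mul_of_nonneg_right (hNn j) hδ
      have h4 := c4 j
      have h5 := c3 j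
      constructor
      · linarith
      · linarith
    · rw [abs_sub_le_iff]
      constructor
      · linarith
      · linarith
  have hcont : ∀ f : ℝ → ℝ,
      (∀ θ ∈ Set.Ici (0:ℝ), ∀ θ' ∈ Set.Ici (0:ℝ), θ ≤ θ' → |f θ' - f θ| ≤ (2 * N) * (θ' - θ)) →
      ContinuousOn f (Set.Ici 0) := by
    intro f hf
    have hlip : LipschitzOnWith (Real.toNNReal (2 * N)) f (Set.Ici 0) := by
      rw [lipschitzOnWith_iff_dist_le_mul]
      intro x hx y hy
      rw [Real.dist_eq, Real.dist_eq, Real.coe_toNNReal _ (by positivity)]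
      rcases le_total x y with h | h
      · have := hf x hx y hy h
        rw [abs_sub_comm (f x), abs_sub_comm x y,
          abs_of_nonneg (by linarith : (0:ℝ) ≤ y - x)]
        linarith
      · have := hf y hy x hx h
        rw [abs_of_nonneg (by linarith : (0:ℝ) ≤ x - y)]
        linarith
    exact hlip.continuousOn
  constructor
  · intro j
    refine piecewiseLinearOnIci_of_lines _
      (hcont _ fun θ hθ θ' hθ' hle => ((hbound θ hθ θ' hθ' hle).1 j))
      (S.lamLines j) ?_
    intro x hx
    obtain ⟨p, hp⟩ := hlam x hx
    exact S.kkt_mem_lamLines hp j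
  · refine piecewiseLinearOnIci_of_lines _
      (hcont _ fun θ hθ θ' hθ' hle => (hbound θ hθ θ' hθ' hle).2)
      S.sigLines ?_
    intro x hx
    obtain ⟨p, hp⟩ := hlam x hx
    exact S.kkt_mem_sigLines hp
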